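/- arXiv:2410.08756 — 4 statements merged into one kernel-verified Lean document; each statement's English description precedes it below -/
import Mathlib

section
/- Let p, n, q, d be positive integers. Let P̂ be a real symmetric positive definite (p+n)×(p+n) matrix partitioned in blocks as P̂ = [[P₁, P₁₂],[P₂₁, P₂ + Σ]] with P₁ ∈ ℝ^{p×p} and P₂, Σ ∈ ℝ^{n×n} symmetric, and let L = [[L₁₁, 0],[L₂₁, G]] with L₁₁ ∈ ℝ^{p×q}, L₂₁ ∈ ℝ^{n×q}, G ∈ ℝ^{n×d}. Define A := P₂ − P₂₁P₁⁻¹P₁₂ + (L₂₁ − P₂₁P₁⁻¹L₁₁)(L₁₁ᵀP₁⁻¹L₁₁)⁻¹(L₂₁ᵀ − L₁₁ᵀP₁⁻¹P₁₂). Assume the matrices L₁₁ᵀP₁⁻¹L₁₁, LᵀP̂⁻¹L, and Gᵀ(Σ+A)⁻¹G are invertible. Then the bottom-right d×d block of (LᵀP̂⁻¹L)⁻¹, namely (0 I_d)(LᵀP̂⁻¹L)⁻¹(0 I_d)ᵀ, equals (Gᵀ(Σ+A)⁻¹G)⁻¹. (Paper's Theorem 2: explicit expression of the Cramér–Rao lower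 bound B(d_{k−1}) with respect to the perturbation covariance Σ.) -/
open Matrix

section Aux

variable {m n : Type*} [Fintype m] [DecidableEq m] [Fintype n] [DecidableEq n]

private lemma aux_posDef_of_posSemidef {M : Matrix n n ℝ} (h : M.PosSemidef)
    (hd : IsUnit M.det) : M.PosDef := by
  refine posDef_iff_dotProduct_mulVec.mpr ⟨h.1, fun x hx => ?_⟩
  rcases (h.dotProduct_mulVec_nonneg x).lt_or_eq with h' | h'
  · exact h'
  · exfalso
    have h0 : M *ᵥ x = 0 := (h.dotProduct_mulVec_zero_iff x).mp h'.symm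
    apply hx
    have : M⁻¹ *ᵥ (M *ᵥ x) = x := by
      rw [mulVec_mulVec, nonsing_inv_mul _ hd, one_mulVec]
    rw [← this, h0, mulVec_zero]

private lemma aux_isUnit_det_of_posDef {M : Matrix n n ℝ} (h : M.PosDef) :
    IsUnit M.det :=
  isUnit_iff_ne_zero.mpr h.det_pos.ne'

private lemma aux_fromBlocks_inv (A : Matrix m m ℝ) (B : Matrix m n ℝ) (C : Matrix n m ℝ)
    (D : Matrix n n ℝ) [Invertible A] [Invertible (D - C * A⁻¹ * B)] :
    (fromBlocks A B C D)⁻¹ =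
      fromBlocks (A⁻¹ + A⁻¹ * B * (D - C * A⁻¹ * B)⁻¹ * C * A⁻¹)
        (-(A⁻¹ * B * (D - C * A⁻¹ * B)⁻¹))
        (-((D - C * A⁻¹ * B)⁻¹ * C * A⁻¹)) ((D - C * A⁻¹ * B)⁻¹) := by
  letI : Invertible (D - C * ⅟A * B) := by rw [invOf_eq_nonsing_inv]; infer_instance
  letI := fromBlocks₁₁Invertible A B C D
  rw [← invOf_eq_nonsing_inv, invOf_fromBlocks₁₁_eq]
  simp only [invOf_eq_nonsing_inv]

private lemma aux_toBlocks₂₂_inv (A : Matrix m m ℝ) (B : Matrix m n ℝ) (C : Matrix n m ℝ)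
    (D : Matrix n n ℝ) [Invertible A] [Invertible (D - C * A⁻¹ * B)] :
    ((fromBlocks A B C D)⁻¹).toBlocks₂₂ = (D - C * A⁻¹ * B)⁻¹ := by
  rw [aux_fromBlocks_inv]
  rfl

end Aux

set_option maxHeartbeats 1600000 in
/-- Paper's Theorem 2: explicit expression of the Cramér–Rao lower bound
`B(d_{k−1})` with respect to the perturbation covariance `Σ`:
the bottom-right `d × d` block of `(Lᵀ P̂⁻¹ L)⁻¹` equals `(Gᵀ (Σ + A)⁻¹ G)⁻¹`. -/
theorem crlb_explicit_expression
    (p n q d : ℕ) (hp : 0 < p) (hn : 0 < n) (hq : 0 < q) (hd : 0 < d)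
    (P₁ : Matrix (Fin p) (Fin p) ℝ) (P₁₂ : Matrix (Fin p) (Fin n) ℝ)
    (P₂₁ : Matrix (Fin n) (Fin p) ℝ) (P₂ Sg : Matrix (Fin n) (Fin n) ℝ)
    (hP₂ : P₂.IsSymm) (hSg : Sg.IsSymm)
    (hPhat : (Matrix.fromBlocks P₁ P₁₂ P₂₁ (P₂ + Sg)).PosDef)
    (L₁₁ : Matrix (Fin p) (Fin q) ℝ) (L₂₁ : Matrix (Fin n) (Fin q) ℝ)
    (G : Matrix (Fin n) (Fin d) ℝ)
    (A : Matrix (Fin n) (Fin n) ℝ)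
    (hA : A = P₂ - P₂₁ * P₁⁻¹ * P₁₂ +
      (L₂₁ - P₂₁ * P₁⁻¹ * L₁₁) * (L₁₁ᵀ * P₁⁻¹ * L₁₁)⁻¹ *
        (L₂₁ᵀ - L₁₁ᵀ * P₁⁻¹ * P₁₂))
    (h1 : IsUnit (L₁₁ᵀ * P₁⁻¹ * L₁₁).det)
    (h2 : IsUnit ((Matrix.fromBlocks L₁₁ 0 L₂₁ G)ᵀ *
        (Matrix.fromBlocks P₁ P₁₂ P₂₁ (P₂ + Sg))⁻¹ *
        (Matrix.fromBlocks L₁₁ 0 L₂₁ G)).det)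
    (h3 : IsUnit (Gᵀ * (Sg + A)⁻¹ * G).det) :
    (((Matrix.fromBlocks L₁₁ 0 L₂₁ G)ᵀ *
        (Matrix.fromBlocks P₁ P₁₂ P₂₁ (P₂ + Sg))⁻¹ *
        (Matrix.fromBlocks L₁₁ 0 L₂₁ G))⁻¹).toBlocks₂₂ =
      (Gᵀ * (Sg + A)⁻¹ * G)⁻¹ := by
  -- symmetry facts
  have hherm := isHermitian_fromBlocks_iff.mp hPhat.isHermitian
  obtain ⟨hP₁h, hBC, -, -⟩ := hherm
  have h21 : P₂₁ = P₁₂ᵀ := by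
    rw [← hBC, conjTranspose_eq_transpose_of_trivial]
  subst h21
  have hP₁s : P₁ᵀ = P₁ := by
    simpa [conjTranspose_eq_transpose_of_trivial] using hP₁h.eq
  -- P₁ is positive definite
  have hP₁ : P₁.PosDef := by
    refine posDef_iff_dotProduct_mulVec.mpr ⟨hP₁h, fun x hx => ?_⟩
    have hv : (Sum.elim x (0 : Fin n → ℝ)) ≠ 0 := by
      intro h
      exact hx (funext fun i => congrFun h (Sum.inl i))
    have h := (posDef_iff_dotProduct_mulVec.mp hPhat).2 hv
    simpa [Function.star_sumElim, fromBlocks_mulVec, sumElim_dotProduct_sumElim] using h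
  haveI iP₁ : Invertible P₁ := P₁.invertibleOfIsUnitDet (aux_isUnit_det_of_posDef hP₁)
  -- the Schur complement Δ (as an opaque constant)
  obtain ⟨Δ, hΔ⟩ : ∃ X : Matrix (Fin n) (Fin n) ℝ,
      X = P₂ + Sg - P₁₂ᵀ * P₁⁻¹ * P₁₂ := ⟨_, rfl⟩
  have hPhat' : (fromBlocks P₁ P₁₂ P₁₂ᴴ (P₂ + Sg)).PosDef := by
    rwa [conjTranspose_eq_transpose_of_trivial]
  have hΔpsd : Δ.PosSemidef := by
    rw [hΔ]
    have := (PosDef.fromBlocks₁₁ P₁₂ (P₂ + Sg) hP₁).mp hPhat'.posSemidef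
    simpa [conjTranspose_eq_transpose_of_trivial] using this
  have hΔdet : IsUnit Δ.det := by
    rw [hΔ]
    have hU : IsUnit (fromBlocks P₁ P₁₂ P₁₂ᵀ (P₂ + Sg)) := hPhat.isUnit
    rw [isUnit_fromBlocks_iff_of_invertible₁₁] at hU
    rw [← isUnit_iff_isUnit_det]
    simpa [invOf_eq_nonsing_inv] using hU
  have hΔpd : Δ.PosDef := aux_posDef_of_posSemidef hΔpsd hΔdet
  haveI iΔ : Invertible Δ := Δ.invertibleOfIsUnitDet hΔdet
  -- abbreviations (opaque constants)
  obtain ⟨Cm, hCm⟩ : ∃ X : Matrix (Fin q) (Fin q) ℝ,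
      X = L₁₁ᵀ * P₁⁻¹ * L₁₁ := ⟨_, rfl⟩
  obtain ⟨K, hK⟩ : ∃ X : Matrix (Fin n) (Fin q) ℝ,
      X = L₂₁ - P₁₂ᵀ * P₁⁻¹ * L₁₁ := ⟨_, rfl⟩
  obtain ⟨Kt, hKt⟩ : ∃ X : Matrix (Fin q) (Fin n) ℝ,
      X = L₂₁ᵀ - L₁₁ᵀ * P₁⁻¹ * P₁₂ := ⟨_, rfl⟩
  obtain ⟨W, hW⟩ : ∃ X : Matrix (Fin q) (Fin q) ℝ,
      X = Cm + Kt * Δ⁻¹ * K := ⟨_, rfl⟩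
  have h1' : IsUnit Cm.det := by rw [hCm]; exact h1
  have hKts : Kᵀ = Kt := by
    rw [hK, hKt, transpose_sub, transpose_mul, transpose_mul, transpose_transpose,
      transpose_nonsing_inv, hP₁s, Matrix.mul_assoc]
  -- Cm and W are positive definite
  have hCpsd : Cm.PosSemidef := by
    rw [hCm]
    have := (hP₁.inv).posSemidef.conjTranspose_mul_mul_same L₁₁
    simpa [conjTranspose_eq_transpose_of_trivial] using this
  have hCpd : Cm.PosDef := aux_posDef_of_posSemidef hCpsd h1'
  have hWpd : W.PosDef := by
    rw [hW]
    have hpsd : (Kt * Δ⁻¹ * K).PosSemidef := by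
      have := (hΔpd.inv).posSemidef.conjTranspose_mul_mul_same K
      simpa [hKts, conjTranspose_eq_transpose_of_trivial] using this
    exact hCpd.add_posSemidef hpsd
  haveI iW : Invertible W := W.invertibleOfIsUnitDet (aux_isUnit_det_of_posDef hWpd)
  -- inverse of Phat
  haveI iΔ' : Invertible (P₂ + Sg - P₁₂ᵀ * P₁⁻¹ * P₁₂) := hΔ ▸ iΔ
  have hPhinv : (fromBlocks P₁ P₁₂ P₁₂ᵀ (P₂ + Sg))⁻¹ =
      fromBlocks (P₁⁻¹ + P₁⁻¹ * P₁₂ * Δ⁻¹ * P₁₂ᵀ * P₁⁻¹)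
        (-(P₁⁻¹ * P₁₂ * Δ⁻¹)) (-(Δ⁻¹ * P₁₂ᵀ * P₁⁻¹)) Δ⁻¹ := by
    rw [hΔ, aux_fromBlocks_inv]
  -- the information matrix as a block matrix
  have hM : (fromBlocks L₁₁ 0 L₂₁ G)ᵀ * (fromBlocks P₁ P₁₂ P₁₂ᵀ (P₂ + Sg))⁻¹ *
      (fromBlocks L₁₁ 0 L₂₁ G) =
      fromBlocks W (Kt * Δ⁻¹ * G) (Gᵀ * Δ⁻¹ * K) (Gᵀ * Δ⁻¹ * G) := by
    rw [hPhinv, fromBlocks_transpose, transpose_zero, fromBlocks_multiply, fromBlocks_multiply]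
    rw [fromBlocks_inj]
    refine ⟨?_, ?_, ?_, ?_⟩
    · rw [hW, hCm, hKt, hK]
      simp only [Matrix.sub_mul, Matrix.mul_sub, Matrix.add_mul, Matrix.mul_add,
        Matrix.mul_assoc, Matrix.neg_mul, Matrix.mul_neg, Matrix.zero_mul, Matrix.mul_zero,
        zero_add, add_zero]
      abel
    · rw [hKt]
      simp only [Matrix.sub_mul, Matrix.mul_sub, Matrix.add_mul, Matrix.mul_add,
        Matrix.mul_assoc, Matrix.neg_mul, Matrix.mul_neg, Matrix.zero_mul, Matrix.mul_zero,
        zero_add, add_zero]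
      abel
    · rw [hK]
      simp only [Matrix.sub_mul, Matrix.mul_sub, Matrix.add_mul, Matrix.mul_add,
        Matrix.mul_assoc, Matrix.neg_mul, Matrix.mul_neg, Matrix.zero_mul, Matrix.mul_zero,
        zero_add, add_zero]
      abel
    · simp only [Matrix.sub_mul, Matrix.mul_sub, Matrix.add_mul, Matrix.mul_add,
        Matrix.mul_assoc, Matrix.neg_mul, Matrix.mul_neg, Matrix.zero_mul, Matrix.mul_zero,
        zero_add, add_zero]
      abel
  -- Woodbury step
  have hSgA : Sg + A = Δ + K * Cm⁻¹ * Kt := by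
    rw [hA, hΔ, hK, hKt, hCm]; noncomm_ring
  have hwood : (Sg + A)⁻¹ = Δ⁻¹ - Δ⁻¹ * K * W⁻¹ * Kt * Δ⁻¹ := by
    have hAC : IsUnit ((Cm⁻¹)⁻¹ + Kt * Δ⁻¹ * K) := by
      rw [nonsing_inv_nonsing_inv _ h1', ← hW]
      exact hWpd.isUnit
    rw [hSgA, add_mul_mul_inv_eq_sub Δ K Cm⁻¹ Kt hΔpd.isUnit hCpd.inv.isUnit hAC,
      nonsing_inv_nonsing_inv _ h1', ← hW]
  -- the Schur complement of the information matrix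
  have hS : Gᵀ * Δ⁻¹ * G - Gᵀ * Δ⁻¹ * K * W⁻¹ * (Kt * Δ⁻¹ * G) =
      Gᵀ * (Sg + A)⁻¹ * G := by
    rw [hwood]
    simp only [Matrix.sub_mul, Matrix.mul_sub, Matrix.add_mul, Matrix.mul_add,
        Matrix.mul_assoc, Matrix.neg_mul, Matrix.mul_neg, Matrix.zero_mul, Matrix.mul_zero,
        zero_add, add_zero]
  haveI iS : Invertible (Gᵀ * Δ⁻¹ * G - Gᵀ * Δ⁻¹ * K * W⁻¹ * (Kt * Δ⁻¹ * G)) := by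
    rw [hS]
    exact (Gᵀ * (Sg + A)⁻¹ * G).invertibleOfIsUnitDet h3
  rw [hM, aux_toBlocks₂₂_inv, hS]
end

section
/- Let (Ω, F, P) be a probability space and n, m, d positive integers. Let x, x̂ : Ω → ℝ^n be random vectors with square-integrable components, let w : Ω → ℝ^n and v : Ω → ℝ^m be random vectors with square-integrable components such that w is independent of the pair (x, x̂) with E[w] = 0, and v is independent of the triple (x, x̂, w) with E[v] = 0. Let F ∈ ℝ^{n×n}, G ∈ ℝ^{n×d}, H ∈ ℝ^{m×n}, K ∈ ℝ^{n×m}, D ∈ ℝ^{n×n} be matrices and d̄ ∈ ℝ^d a deterministic vector. Define x⁺ := F x + G d̄ + w, y := H x⁺ + v, and x̂⁺ := D x̂ + K y. Then Cov(x⁺, x̂⁺) = F Cov(x, x̂) Dᵀ + Cov(x⁺) Hᵀ Kᵀ. (Paper's Theorem 3, equation (36): recursion for the cross-covariance between the state and the unbiased minimum-variance estimate.) -/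
open Matrix MeasureTheory ProbabilityTheory

noncomputable def cov {Ω : Type*} [MeasurableSpace Ω] (μ : Measure Ω) {p q : ℕ}
    (X : Ω → Fin p → ℝ) (Y : Ω → Fin q → ℝ) : Matrix (Fin p) (Fin q) ℝ :=
  Matrix.of fun i j =>
    ∫ ω, (X ω i - ∫ ω', X ω' i ∂μ) * (Y ω j - ∫ ω', Y ω' j ∂μ) ∂μ

section Aux
variable {Ω : Type*} [MeasurableSpace Ω] {μ : Measure Ω} [IsProbabilityMeasure μ]

lemma int_mul_L2 {f g : Ω → ℝ} (hf : MemLp f 2 μ) (hg : MemLp g 2 μ) :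
    Integrable (fun ω => f ω * g ω) μ := by
  rw [← memLp_one_iff_integrable]
  exact MemLp.smul (p := 2) (q := 2) (r := 1) hg hf

lemma memLp_center {f : Ω → ℝ} (hf : MemLp f 2 μ) :
    MemLp (fun ω => f ω - ∫ ω', f ω' ∂μ) 2 μ :=
  hf.sub (memLp_const _)

lemma int_center {f : Ω → ℝ} (hf : MemLp f 2 μ) :
    ∫ ω, (f ω - ∫ ω', f ω' ∂μ) ∂μ = 0 := by
  rw [integral_sub (memLp_one_iff_integrable.mp (hf.mono_exponent one_le_two))
    (integrable_const _), integral_const]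
  simp

lemma memLp_mulVec {p q : ℕ} (A : Matrix (Fin p) (Fin q) ℝ) {X : Ω → Fin q → ℝ}
    (hX : ∀ i, MemLp (fun ω => X ω i) 2 μ) (i : Fin p) :
    MemLp (fun ω => A.mulVec (X ω) i) 2 μ := by
  simp only [Matrix.mulVec, dotProduct]
  exact memLp_finset_sum _ (fun k _ => (hX k).const_mul _)

lemma meas_mulVec {p q : ℕ} (A : Matrix (Fin p) (Fin q) ℝ) :
    Measurable (fun z : Fin q → ℝ => A.mulVec z) := by
  apply measurable_pi_lambda
  intro i
  simp only [Matrix.mulVec, dotProduct]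
  exact Finset.measurable_sum _ fun k _ => (measurable_pi_apply k).const_mul _

lemma cov_add_right {p q : ℕ} {X : Ω → Fin p → ℝ} {Y Z : Ω → Fin q → ℝ}
    (hX : ∀ i, MemLp (fun ω => X ω i) 2 μ)
    (hY : ∀ i, MemLp (fun ω => Y ω i) 2 μ)
    (hZ : ∀ i, MemLp (fun ω => Z ω i) 2 μ) :
    cov μ X (fun ω => Y ω + Z ω) = cov μ X Y + cov μ X Z := by
  ext i j
  have hYi := memLp_one_iff_integrable.mp ((hY j).mono_exponent one_le_two)
  have hZi := memLp_one_iff_integrable.mp ((hZ j).mono_exponent one_le_two)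
  simp only [cov, Matrix.add_apply, Matrix.of_apply, Pi.add_apply]
  rw [integral_add hYi hZi]
  rw [← integral_add (int_mul_L2 (memLp_center (hX i)) (memLp_center (hY j)))
      (int_mul_L2 (memLp_center (hX i)) (memLp_center (hZ j)))]
  congr 1; ext ω; ring

lemma cov_add_left {p q : ℕ} {X Y : Ω → Fin p → ℝ} {Z : Ω → Fin q → ℝ}
    (hX : ∀ i, MemLp (fun ω => X ω i) 2 μ)
    (hY : ∀ i, MemLp (fun ω => Y ω i) 2 μ)
    (hZ : ∀ i, MemLp (fun ω => Z ω i) 2 μ) :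
    cov μ (fun ω => X ω + Y ω) Z = cov μ X Z + cov μ Y Z := by
  ext i j
  have hXi := memLp_one_iff_integrable.mp ((hX i).mono_exponent one_le_two)
  have hYi := memLp_one_iff_integrable.mp ((hY i).mono_exponent one_le_two)
  simp only [cov, Matrix.add_apply, Matrix.of_apply, Pi.add_apply]
  rw [integral_add hXi hYi]
  rw [← integral_add (int_mul_L2 (memLp_center (hX i)) (memLp_center (hZ j)))
      (int_mul_L2 (memLp_center (hY i)) (memLp_center (hZ j)))]
  congr 1; ext ω; ring

lemma cov_const_add_left {p q : ℕ} {X : Ω → Fin p → ℝ} {Z : Ω → Fin q → ℝ}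
    (c : Fin p → ℝ) (hX : ∀ i, MemLp (fun ω => X ω i) 2 μ) :
    cov μ (fun ω => X ω + c) Z = cov μ X Z := by
  ext i j
  have hXi := memLp_one_iff_integrable.mp ((hX i).mono_exponent one_le_two)
  simp only [cov, Matrix.of_apply, Pi.add_apply]
  rw [integral_add hXi (integrable_const _), integral_const]
  simp only [measure_univ, ENNReal.toReal_one, probReal_univ, smul_eq_mul, one_mul]
  congr 1; ext ω; ring_nf

lemma cov_mulVec_right {p q r : ℕ} {X : Ω → Fin p → ℝ} {Y : Ω → Fin r → ℝ}
    (A : Matrix (Fin q) (Fin r) ℝ)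
    (hX : ∀ i, MemLp (fun ω => X ω i) 2 μ)
    (hY : ∀ i, MemLp (fun ω => Y ω i) 2 μ) :
    cov μ X (fun ω => A.mulVec (Y ω)) = cov μ X Y * Aᵀ := by
  ext i j
  simp only [cov, Matrix.of_apply, Matrix.mul_apply, Matrix.transpose_apply,
    Matrix.mulVec, dotProduct]
  have hint : ∀ k, Integrable (fun ω => A j k * Y ω k) μ := fun k =>
    (memLp_one_iff_integrable.mp ((hY k).mono_exponent one_le_two)).const_mul _
  rw [integral_finset_sum _ fun k _ => hint k]
  have : (fun ω => (X ω i - ∫ ω', X ω' i ∂μ) *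
      (∑ k, A j k * Y ω k - ∑ k, ∫ ω', A j k * Y ω' k ∂μ)) =
      fun ω => ∑ k, A j k * ((X ω i - ∫ ω', X ω' i ∂μ) * (Y ω k - ∫ ω', Y ω' k ∂μ)) := by
    ext ω
    rw [← Finset.sum_sub_distrib, Finset.mul_sum]
    congr 1; ext k
    rw [integral_const_mul]; ring
  rw [this, integral_finset_sum _ fun k _ =>
    ((int_mul_L2 (memLp_center (hX i)) (memLp_center (hY k))).const_mul _)]
  congr 1; ext k
  rw [integral_const_mul]; ring

lemma cov_mulVec_left {p q r : ℕ} {X : Ω → Fin r → ℝ} {Z : Ω → Fin q → ℝ}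
    (A : Matrix (Fin p) (Fin r) ℝ)
    (hX : ∀ i, MemLp (fun ω => X ω i) 2 μ)
    (hZ : ∀ i, MemLp (fun ω => Z ω i) 2 μ) :
    cov μ (fun ω => A.mulVec (X ω)) Z = A * cov μ X Z := by
  ext i j
  simp only [cov, Matrix.of_apply, Matrix.mul_apply, Matrix.mulVec, dotProduct]
  have hint : ∀ k, Integrable (fun ω => A i k * X ω k) μ := fun k =>
    (memLp_one_iff_integrable.mp ((hX k).mono_exponent one_le_two)).const_mul _
  rw [integral_finset_sum _ fun k _ => hint k]
  have : (fun ω => (∑ k, A i k * X ω k - ∑ k, ∫ ω', A i k * X ω' k ∂μ) *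
      (Z ω j - ∫ ω', Z ω' j ∂μ)) =
      fun ω => ∑ k, A i k * ((X ω k - ∫ ω', X ω' k ∂μ) * (Z ω j - ∫ ω', Z ω' j ∂μ)) := by
    ext ω
    rw [← Finset.sum_sub_distrib, Finset.sum_mul]
    congr 1; ext k
    rw [integral_const_mul]; ring
  rw [this, integral_finset_sum _ fun k _ =>
    ((int_mul_L2 (memLp_center (hX k)) (memLp_center (hZ j))).const_mul _)]
  congr 1; ext k
  rw [integral_const_mul]

lemma cov_indep_zero {p q : ℕ} {X : Ω → Fin p → ℝ} {Y : Ω → Fin q → ℝ}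
    (h : IndepFun X Y μ)
    (hX : ∀ i, MemLp (fun ω => X ω i) 2 μ)
    (hY : ∀ i, MemLp (fun ω => Y ω i) 2 μ) :
    cov μ X Y = 0 := by
  ext i j
  simp only [cov, Matrix.of_apply, Matrix.zero_apply]
  have hind : IndepFun (fun ω => X ω i - ∫ ω', X ω' i ∂μ)
      (fun ω => Y ω j - ∫ ω', Y ω' j ∂μ) μ :=
    h.comp ((measurable_pi_apply i).sub measurable_const)
      ((measurable_pi_apply j).sub measurable_const)
  have := hind.integral_mul_eq_mul_integral
    (memLp_one_iff_integrable.mp ((memLp_center (hX i)).mono_exponent one_le_two)).aestronglyMeasurable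
    (memLp_one_iff_integrable.mp ((memLp_center (hY j)).mono_exponent one_le_two)).aestronglyMeasurable
  rw [show (∫ ω, (X ω i - ∫ ω', X ω' i ∂μ) * (Y ω j - ∫ ω', Y ω' j ∂μ) ∂μ)
      = integral μ ((fun ω => X ω i - ∫ ω', X ω' i ∂μ) * (fun ω => Y ω j - ∫ ω', Y ω' j ∂μ)) from rfl,
    this, int_center (hX i), zero_mul]

end Aux

/-- Paper's Theorem 3, equation (36): for `x⁺ = F x + G d̄ + w`, `y = H x⁺ + v`,
`x̂⁺ = D x̂ + K y`, with `w` independent of `(x, x̂)` and `v` independent of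
`(x, x̂, w)`, both zero-mean,
`Cov(x⁺, x̂⁺) = F Cov(x, x̂) Dᵀ + Cov(x⁺) Hᵀ Kᵀ`. -/
theorem cov_state_estimate_cross_recursion
    {Ω : Type*} [MeasurableSpace Ω] (μ : Measure Ω) [IsProbabilityMeasure μ]
    (n m d : ℕ) (hn : 0 < n) (hm : 0 < m) (hd : 0 < d)
    (x xhat : Ω → Fin n → ℝ) (w : Ω → Fin n → ℝ) (v : Ω → Fin m → ℝ)
    (hxmeas : Measurable x) (hxhatmeas : Measurable xhat)
    (hwmeas : Measurable w) (hvmeas : Measurable v)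
    (hx2 : ∀ i, MemLp (fun ω => x ω i) 2 μ)
    (hxhat2 : ∀ i, MemLp (fun ω => xhat ω i) 2 μ)
    (hw2 : ∀ i, MemLp (fun ω => w ω i) 2 μ)
    (hv2 : ∀ i, MemLp (fun ω => v ω i) 2 μ)
    (hwindep : IndepFun w (fun ω => (x ω, xhat ω)) μ)
    (hwmean : ∀ i, ∫ ω, w ω i ∂μ = 0)
    (hvindep : IndepFun v (fun ω => (x ω, xhat ω, w ω)) μ)
    (hvmean : ∀ i, ∫ ω, v ω i ∂μ = 0)
    (F : Matrix (Fin n) (Fin n) ℝ) (G : Matrix (Fin n) (Fin d) ℝ)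
    (H : Matrix (Fin m) (Fin n) ℝ) (K : Matrix (Fin n) (Fin m) ℝ)
    (D : Matrix (Fin n) (Fin n) ℝ) (dbar : Fin d → ℝ)
    (xplus : Ω → Fin n → ℝ)
    (hxplus : xplus = fun ω => F.mulVec (x ω) + G.mulVec dbar + w ω)
    (y : Ω → Fin m → ℝ)
    (hy : y = fun ω => H.mulVec (xplus ω) + v ω)
    (xhatplus : Ω → Fin n → ℝ)
    (hxhatplus : xhatplus = fun ω => D.mulVec (xhat ω) + K.mulVec (y ω)) :
    cov μ xplus xhatplus = F * cov μ x xhat * Dᵀ + cov μ xplus xplus * Hᵀ * Kᵀ := by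
  subst hy hxhatplus
  -- L² of components of xplus
  have hxplus2 : ∀ i, MemLp (fun ω => xplus ω i) 2 μ := by
    intro i
    rw [hxplus]
    simp only [Pi.add_apply]
    exact ((memLp_mulVec F hx2 i).add (memLp_const _)).add (hw2 i)
  -- cov xplus v = 0
  have hxplusv : cov μ xplus v = 0 := by
    apply cov_indep_zero _ hxplus2 hv2
    have hφ : Measurable (fun z : (Fin n → ℝ) × (Fin n → ℝ) × (Fin n → ℝ) =>
        F.mulVec z.1 + G.mulVec dbar + z.2.2) :=
      (((meas_mulVec F).comp measurable_fst).add measurable_const).add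
        (measurable_snd.snd)
    have := (hvindep.symm.comp hφ measurable_id)
    rw [hxplus]
    exact this
  -- cov w xhat = 0
  have hwxhat : cov μ w xhat = 0 :=
    cov_indep_zero (hwindep.comp measurable_id measurable_snd) hw2 hxhat2
  -- cov xplus xhat = F * cov x xhat
  have hps : cov μ xplus xhat = F * cov μ x xhat := by
    rw [hxplus]
    have hA : ∀ i, MemLp (fun ω => (F.mulVec (x ω) + G.mulVec dbar) i) 2 μ :=
      fun i => (memLp_mulVec F hx2 i).add (memLp_const _)
    have h := cov_add_left (μ := μ) (X := fun ω => F.mulVec (x ω) + G.mulVec dbar)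
      (Y := w) (Z := xhat) hA hw2 hxhat2
    rw [hwxhat, add_zero] at h
    refine Eq.trans h ?_
    have h2 := cov_const_add_left (μ := μ) (X := fun ω => F.mulVec (x ω)) (Z := xhat)
      (G.mulVec dbar) (memLp_mulVec F hx2)
    exact h2.trans (cov_mulVec_left F hx2 hxhat2)
  -- expand the right argument
  have hexp : (fun ω => D.mulVec (xhat ω) + K.mulVec (H.mulVec (xplus ω) + v ω))
      = fun ω => D.mulVec (xhat ω) +
          ((K * H).mulVec (xplus ω) + K.mulVec (v ω)) := by
    funext ω
    rw [Matrix.mulVec_add, Matrix.mulVec_mulVec]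
  rw [hexp]
  have hKH2 : ∀ i, MemLp (fun ω => (K * H).mulVec (xplus ω) i) 2 μ :=
    memLp_mulVec _ hxplus2
  have hKv2 : ∀ i, MemLp (fun ω => K.mulVec (v ω) i) 2 μ := memLp_mulVec _ hv2
  have e1 : cov μ xplus
        (fun ω => D.mulVec (xhat ω) + ((K * H).mulVec (xplus ω) + K.mulVec (v ω)))
      = cov μ xplus (fun ω => D.mulVec (xhat ω)) +
        cov μ xplus (fun ω => (K * H).mulVec (xplus ω) + K.mulVec (v ω)) :=
    cov_add_right (μ := μ) (X := xplus) (Y := fun ω => D.mulVec (xhat ω))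
      (Z := fun ω => (K * H).mulVec (xplus ω) + K.mulVec (v ω))
      hxplus2 (memLp_mulVec D hxhat2) (fun i => (hKH2 i).add (hKv2 i))
  have e2 : cov μ xplus (fun ω => (K * H).mulVec (xplus ω) + K.mulVec (v ω))
      = cov μ xplus (fun ω => (K * H).mulVec (xplus ω)) +
        cov μ xplus (fun ω => K.mulVec (v ω)) :=
    cov_add_right (μ := μ) (X := xplus) (Y := fun ω => (K * H).mulVec (xplus ω))
      (Z := fun ω => K.mulVec (v ω)) hxplus2 hKH2 hKv2
  have e3 : cov μ xplus (fun ω => D.mulVec (xhat ω)) = cov μ xplus xhat * Dᵀ :=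
    cov_mulVec_right D hxplus2 hxhat2
  have e4 : cov μ xplus (fun ω => (K * H).mulVec (xplus ω))
      = cov μ xplus xplus * (K * H)ᵀ := cov_mulVec_right (K * H) hxplus2 hxplus2
  have e5 : cov μ xplus (fun ω => K.mulVec (v ω)) = cov μ xplus v * Kᵀ :=
    cov_mulVec_right K hxplus2 hv2
  rw [e1, e2, e3, e4, e5, hxplusv, hps, Matrix.zero_mul, add_zero,
    Matrix.transpose_mul, ← Matrix.mul_assoc, Matrix.mul_assoc F]
end

section
/- Let n, d be positive integers with d ≤ n, σ > 0 and γ ∈ ℝ. Let G ∈ ℝ^{n×d} have singular value decomposition G = U (Υ 0)ᵀ V, where U ∈ ℝ^{n×n} and V ∈ ℝ^{d×d} are orthogonal and Υ ∈ ℝ^{d×d} is an invertible diagonal matrix ((Υ 0) is d×n). Let Ã ∈ ℝ^{n×n} be symmetric positive semi-definite and partition M := Uᵀ(Ã + σI_n)U = [[Ã₁₁, Ã₁₂],[Ã₂₁, Ã₂₂]] with Ã₁₁ ∈ ℝ^{d×d}. Suppose the symmetric matrix Σ̃₁₁ ∈ ℝ^{d×d} satisfies Σ̃₁₁ ⪰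 Ã₁₁ and trace(Υ⁻²(Σ̃₁₁ − Ã₁₂Ã₂₂⁻¹Ã₂₁)) ≥ γ. Define Σ := U · blockdiag(Σ̃₁₁ − Ã₁₁ + σI_d, σI_{n−d}) · Uᵀ. Then: (i) Σ ⪰ σI_n; (ii) Gᵀ(Σ + Ã)⁻¹G is invertible; and (iii) trace((Gᵀ(Σ + Ã)⁻¹G)⁻¹) ≥ γ. (Paper's Theorem 5: the matrix Σ_k constructed from a feasible point of the semi-definite program (30) is a feasible — relaxed — solution of the privacy-constrained optimization problem (26).) -/
open Matrix

private lemma psd_conj {m n : Type*} [Fintype m] [Fintype n] {A : Matrix n n ℝ}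
    (hA : A.PosSemidef) (B : Matrix m n ℝ) : (B * A * Bᵀ).PosSemidef := by
  have h := hA.mul_mul_conjTranspose_same B
  rwa [conjTranspose_eq_transpose_of_trivial] at h

private lemma pd_conj {m n : Type*} [Fintype m] [Fintype n] {A : Matrix n n ℝ}
    (hA : A.PosDef) (B : Matrix n m ℝ) (hB : ∀ x : m → ℝ, x ≠ 0 → B *ᵥ x ≠ 0) :
    (Bᵀ * A * B).PosDef := by
  refine PosDef.of_dotProduct_mulVec_pos ?_ (fun x hx => ?_)
  · have h := (hA.posSemidef.conjTranspose_mul_mul_same B).1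
    rwa [conjTranspose_eq_transpose_of_trivial] at h
  · have h := hA.dotProduct_mulVec_pos (hB x hx)
    simpa only [star_mulVec, dotProduct_mulVec, vecMul_vecMul,
      conjTranspose_eq_transpose_of_trivial] using h

private lemma pd_smul_one {n : Type*} [Fintype n] [DecidableEq n] {σ : ℝ} (hσ : 0 < σ) :
    (σ • (1 : Matrix n n ℝ)).PosDef := by
  rw [smul_one_eq_diagonal]
  exact Matrix.PosDef.diagonal fun _ => hσ

private lemma fromBlocks_sub' {l m n o α : Type*} [SubtractionMonoid α]
    (A : Matrix n l α) (B : Matrix n m α) (C : Matrix o l α) (D : Matrix o m α)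
    (A' : Matrix n l α) (B' : Matrix n m α) (C' : Matrix o l α) (D' : Matrix o m α) :
    fromBlocks A B C D - fromBlocks A' B' C' D' =
      fromBlocks (A - A') (B - B') (C - C') (D - D') := by
  ext i j
  rcases i with i | i <;> rcases j with j | j <;> simp [fromBlocks]

/-- Paper's Theorem 5: the matrix `Σ` constructed from a feasible point of the
semi-definite program (30) is a feasible (relaxed) solution of the
privacy-constrained optimization problem (26). Here the ambient dimension is
`n = d + e` (so `d ≤ n`), realized by the index type `Fin d ⊕ Fin e`. -/
theorem relaxed_solution_feasible
    (d e : ℕ) (hd : 0 < d)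
    (σ γ : ℝ) (hσ : 0 < σ)
    (U : Matrix (Fin d ⊕ Fin e) (Fin d ⊕ Fin e) ℝ) (hU : Uᵀ * U = 1)
    (V : Matrix (Fin d) (Fin d) ℝ) (hV : Vᵀ * V = 1)
    (Υ : Matrix (Fin d) (Fin d) ℝ) (hΥdiag : Υ.IsDiag) (hΥinv : IsUnit Υ.det)
    (G : Matrix (Fin d ⊕ Fin e) (Fin d) ℝ)
    (hG : G = U * (Matrix.fromCols Υ (0 : Matrix (Fin d) (Fin e) ℝ))ᵀ * V)
    (Atil : Matrix (Fin d ⊕ Fin e) (Fin d ⊕ Fin e) ℝ) (hAtil : Atil.PosSemidef)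
    (M : Matrix (Fin d ⊕ Fin e) (Fin d ⊕ Fin e) ℝ)
    (hM : M = Uᵀ * (Atil + σ • (1 : Matrix (Fin d ⊕ Fin e) (Fin d ⊕ Fin e) ℝ)) * U)
    (Sg₁₁ : Matrix (Fin d) (Fin d) ℝ) (hSgsymm : Sg₁₁.IsSymm)
    (hSgA : (Sg₁₁ - M.toBlocks₁₁).PosSemidef)
    (htr : γ ≤ (Υ⁻¹ ^ 2 *
      (Sg₁₁ - M.toBlocks₁₂ * (M.toBlocks₂₂)⁻¹ * M.toBlocks₂₁)).trace)
    (Sg : Matrix (Fin d ⊕ Fin e) (Fin d ⊕ Fin e) ℝ)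
    (hSg : Sg = U * Matrix.fromBlocks
      (Sg₁₁ - M.toBlocks₁₁ + σ • (1 : Matrix (Fin d) (Fin d) ℝ)) 0 0
      (σ • (1 : Matrix (Fin e) (Fin e) ℝ)) * Uᵀ) :
    (Sg - σ • (1 : Matrix (Fin d ⊕ Fin e) (Fin d ⊕ Fin e) ℝ)).PosSemidef ∧
    IsUnit (Gᵀ * (Sg + Atil)⁻¹ * G).det ∧
    γ ≤ ((Gᵀ * (Sg + Atil)⁻¹ * G)⁻¹).trace := by
  set A11 := M.toBlocks₁₁ with hA11
  set A12 := M.toBlocks₁₂ with hA12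
  set A21 := M.toBlocks₂₁ with hA21
  set A22 := M.toBlocks₂₂ with hA22
  have hMfb : M = fromBlocks A11 A12 A21 A22 := (fromBlocks_toBlocks M).symm
  have hUUT : U * Uᵀ = 1 := mul_eq_one_comm.mp hU
  have hVVT : V * Vᵀ = 1 := mul_eq_one_comm.mp hV
  have hcan : ∀ {k : Type} (X : Matrix (Fin d ⊕ Fin e) k ℝ), Uᵀ * (U * X) = X := by
    intro k X; rw [← Matrix.mul_assoc, hU, Matrix.one_mul]
  have hcan' : ∀ {k : Type} (X : Matrix (Fin d ⊕ Fin e) k ℝ), U * (Uᵀ * X) = X := by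
    intro k X; rw [← Matrix.mul_assoc, hUUT, Matrix.one_mul]
  have hUne : ∀ x : (Fin d ⊕ Fin e) → ℝ, x ≠ 0 → U *ᵥ x ≠ 0 := by
    intro x hx h
    apply hx
    have h2 : Uᵀ *ᵥ (U *ᵥ x) = x := by rw [mulVec_mulVec, hU, one_mulVec]
    rw [h, mulVec_zero] at h2
    exact h2.symm
  have hMpd : M.PosDef := by
    rw [hM]
    exact pd_conj (Matrix.PosDef.posSemidef_add hAtil (pd_smul_one hσ)) U hUne
  have hs1 : (σ • (1 : Matrix (Fin d ⊕ Fin e) (Fin d ⊕ Fin e) ℝ)) =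
      fromBlocks (σ • (1 : Matrix (Fin d) (Fin d) ℝ)) 0 0
        (σ • (1 : Matrix (Fin e) (Fin e) ℝ)) := by
    rw [← fromBlocks_one, fromBlocks_smul]
    simp
  -- part (i)
  have hXpsd : (fromBlocks (Sg₁₁ - A11) 0 0
      (0 : Matrix (Fin e) (Fin e) ℝ)).PosSemidef := by
    have h2 := psd_conj hSgA
      (fromRows (1 : Matrix (Fin d) (Fin d) ℝ) (0 : Matrix (Fin e) (Fin d) ℝ))
    have heq : fromRows (1 : Matrix (Fin d) (Fin d) ℝ) (0 : Matrix (Fin e) (Fin d) ℝ) *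
        (Sg₁₁ - A11) *
        (fromRows (1 : Matrix (Fin d) (Fin d) ℝ) (0 : Matrix (Fin e) (Fin d) ℝ))ᵀ =
        fromBlocks (Sg₁₁ - A11) 0 0 0 := by
      rw [transpose_fromRows, transpose_one, transpose_zero, fromRows_mul, Matrix.one_mul,
        Matrix.zero_mul, fromRows_mul_fromCols]
      simp
    rwa [heq] at h2
  have h1 : Sg - σ • (1 : Matrix (Fin d ⊕ Fin e) (Fin d ⊕ Fin e) ℝ) =
      U * fromBlocks (Sg₁₁ - A11) 0 0 0 * Uᵀ := by
    rw [hSg]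
    have hB : fromBlocks (Sg₁₁ - A11 + σ • (1 : Matrix (Fin d) (Fin d) ℝ)) 0 0
        (σ • (1 : Matrix (Fin e) (Fin e) ℝ)) =
        fromBlocks (Sg₁₁ - A11) 0 0 0 +
          σ • (1 : Matrix (Fin d ⊕ Fin e) (Fin d ⊕ Fin e) ℝ) := by
      rw [hs1, fromBlocks_add]
      congr 1 <;> simp
    rw [hB, Matrix.mul_add, Matrix.add_mul]
    have hσ1 : U * (σ • (1 : Matrix (Fin d ⊕ Fin e) (Fin d ⊕ Fin e) ℝ)) * Uᵀ =
        σ • (1 : Matrix (Fin d ⊕ Fin e) (Fin d ⊕ Fin e) ℝ) := by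
      rw [mul_smul_comm, Matrix.mul_one, smul_mul_assoc, hUUT]
    rw [hσ1, add_sub_cancel_right]
  have part1 : (Sg - σ • (1 : Matrix (Fin d ⊕ Fin e) (Fin d ⊕ Fin e) ℝ)).PosSemidef := by
    rw [h1]; exact psd_conj hXpsd U
  -- the conjugated matrix P
  have hUAU : Uᵀ * Atil * U = M - σ • (1 : Matrix (Fin d ⊕ Fin e) (Fin d ⊕ Fin e) ℝ) := by
    have h3 : Uᵀ * (Atil + σ • (1 : Matrix (Fin d ⊕ Fin e) (Fin d ⊕ Fin e) ℝ)) * U =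
        Uᵀ * Atil * U + σ • (1 : Matrix (Fin d ⊕ Fin e) (Fin d ⊕ Fin e) ℝ) := by
      rw [Matrix.mul_add, Matrix.add_mul, mul_smul_comm, Matrix.mul_one, smul_mul_assoc, hU]
    rw [hM, h3, add_sub_cancel_right]
  have hMs : M - σ • (1 : Matrix (Fin d ⊕ Fin e) (Fin d ⊕ Fin e) ℝ) =
      fromBlocks (A11 - σ • (1 : Matrix (Fin d) (Fin d) ℝ)) A12 A21
        (A22 - σ • (1 : Matrix (Fin e) (Fin e) ℝ)) := by
    conv_lhs => rw [hMfb, hs1]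
    rw [fromBlocks_sub']
    congr 1 <;> simp
  have hUSgU : Uᵀ * Sg * U = fromBlocks
      (Sg₁₁ - A11 + σ • (1 : Matrix (Fin d) (Fin d) ℝ)) 0 0
      (σ • (1 : Matrix (Fin e) (Fin e) ℝ)) := by
    rw [hSg]
    simp only [Matrix.mul_assoc]
    rw [hU, Matrix.mul_one, hcan]
  have hPeq : Uᵀ * (Sg + Atil) * U = fromBlocks Sg₁₁ A12 A21 A22 := by
    rw [Matrix.mul_add, Matrix.add_mul, hUSgU, hUAU, hMs, fromBlocks_add,
      show Sg₁₁ - A11 + σ • (1 : Matrix (Fin d) (Fin d) ℝ) + (A11 - σ • 1) = Sg₁₁ from by abel,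
      show (0 : Matrix (Fin d) (Fin e) ℝ) + A12 = A12 from zero_add _,
      show (0 : Matrix (Fin e) (Fin d) ℝ) + A21 = A21 from zero_add _,
      show σ • (1 : Matrix (Fin e) (Fin e) ℝ) + (A22 - σ • 1) = A22 from by abel]
  have hPpd : (fromBlocks Sg₁₁ A12 A21 A22).PosDef := by
    have h4 : fromBlocks Sg₁₁ A12 A21 A22 = fromBlocks (Sg₁₁ - A11) 0 0 0 + M := by
      rw [hMfb, fromBlocks_add]
      simp only [zero_add, sub_add_cancel]
    rw [h4]
    exact Matrix.PosDef.posSemidef_add hXpsd hMpd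
  -- block ₂₂ is positive definite
  have hA22pd : A22.PosDef := by
    have hne : ∀ x : Fin e → ℝ, x ≠ 0 →
        (fromRows (0 : Matrix (Fin d) (Fin e) ℝ) (1 : Matrix (Fin e) (Fin e) ℝ)) *ᵥ x ≠ 0 := by
      intro x hx h
      apply hx
      funext i
      have h5 := congrFun h (Sum.inr i)
      simpa [fromRows_mulVec] using h5
    have h3 := pd_conj hMpd (fromRows (0 : Matrix (Fin d) (Fin e) ℝ) 1) hne
    have heq : (fromRows (0 : Matrix (Fin d) (Fin e) ℝ) (1 : Matrix (Fin e) (Fin e) ℝ))ᵀ * M *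
        fromRows (0 : Matrix (Fin d) (Fin e) ℝ) (1 : Matrix (Fin e) (Fin e) ℝ) = A22 := by
      conv_lhs => rw [hMfb]
      rw [transpose_fromRows, transpose_zero, transpose_one, fromCols_mul_fromBlocks,
        fromCols_mul_fromRows]
      simp
    rwa [heq] at h3
  haveI iA22 : Invertible A22 := hA22pd.isUnit.invertible
  haveI iP : Invertible (fromBlocks Sg₁₁ A12 A21 A22) := hPpd.isUnit.invertible
  haveI iS' : Invertible (Sg₁₁ - A12 * ⅟A22 * A21) :=
    invertibleOfFromBlocks₂₂Invertible Sg₁₁ A12 A21 A22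
  have hS'S : Sg₁₁ - A12 * ⅟A22 * A21 = Sg₁₁ - A12 * A22⁻¹ * A21 := by
    rw [invOf_eq_nonsing_inv]
  have hSdet : IsUnit (Sg₁₁ - A12 * A22⁻¹ * A21).det := by
    have h6 := (Matrix.isUnit_iff_isUnit_det _).mp
      (isUnit_of_invertible (Sg₁₁ - A12 * ⅟A22 * A21))
    rwa [hS'S] at h6
  have hW : ⅟(Sg₁₁ - A12 * ⅟A22 * A21) = (Sg₁₁ - A12 * A22⁻¹ * A21)⁻¹ := by
    rw [invOf_eq_nonsing_inv, hS'S]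
  have hPinv₁₁ : ((fromBlocks Sg₁₁ A12 A21 A22)⁻¹).toBlocks₁₁ =
      (Sg₁₁ - A12 * A22⁻¹ * A21)⁻¹ := by
    rw [← invOf_eq_nonsing_inv, invOf_fromBlocks₂₂_eq, toBlocks_fromBlocks₁₁, hW]
  -- relating Sg + Atil to P
  have hSA : Sg + Atil = U * fromBlocks Sg₁₁ A12 A21 A22 * Uᵀ := by
    rw [← hPeq]
    simp only [Matrix.mul_assoc]
    rw [hUUT, Matrix.mul_one, hcan']
  have hSAinv : (Sg + Atil)⁻¹ = U * (fromBlocks Sg₁₁ A12 A21 A22)⁻¹ * Uᵀ := by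
    rw [hSA, Matrix.mul_inv_rev, Matrix.mul_inv_rev, Matrix.inv_eq_right_inv hU,
      Matrix.inv_eq_left_inv hU]
    simp only [Matrix.mul_assoc]
  have hEQE : ∀ Q : Matrix (Fin d ⊕ Fin e) (Fin d ⊕ Fin e) ℝ,
      fromCols Υ (0 : Matrix (Fin d) (Fin e) ℝ) * Q *
        (fromCols Υ (0 : Matrix (Fin d) (Fin e) ℝ))ᵀ = Υ * Q.toBlocks₁₁ * Υ := by
    intro Q
    conv_lhs => rw [← fromBlocks_toBlocks Q]
    rw [transpose_fromCols, hΥdiag.isSymm.eq, fromCols_mul_fromBlocks,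
      fromCols_mul_fromRows]
    simp
  have hKeq : Gᵀ * (Sg + Atil)⁻¹ * G =
      Vᵀ * (Υ * (Sg₁₁ - A12 * A22⁻¹ * A21)⁻¹ * Υ) * V := by
    rw [hG, hSAinv]
    have hGT : (U * (fromCols Υ (0 : Matrix (Fin d) (Fin e) ℝ))ᵀ * V)ᵀ =
        Vᵀ * (fromCols Υ (0 : Matrix (Fin d) (Fin e) ℝ) * Uᵀ) := by
      rw [transpose_mul, transpose_mul, transpose_transpose]
    rw [hGT, ← hPinv₁₁, ← hEQE]
    simp only [Matrix.mul_assoc, hcan]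
  have hVdet : IsUnit V.det := by
    have h7 := congrArg Matrix.det hV
    rw [Matrix.det_mul, Matrix.det_one, Matrix.det_transpose] at h7
    exact IsUnit.of_mul_eq_one _ h7
  have hSinvdet : IsUnit ((Sg₁₁ - A12 * A22⁻¹ * A21)⁻¹).det :=
    (Sg₁₁ - A12 * A22⁻¹ * A21).isUnit_nonsing_inv_det hSdet
  refine ⟨part1, ?_, ?_⟩
  · rw [hKeq]
    simp only [Matrix.det_mul, Matrix.det_transpose]
    exact (hVdet.mul ((hΥinv.mul hSinvdet).mul hΥinv)).mul hVdet
  · have hKinv : (Gᵀ * (Sg + Atil)⁻¹ * G)⁻¹ =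
        Vᵀ * (Υ⁻¹ * (Sg₁₁ - A12 * A22⁻¹ * A21) * Υ⁻¹) * V := by
      rw [hKeq, Matrix.mul_inv_rev, Matrix.mul_inv_rev, Matrix.mul_inv_rev, Matrix.mul_inv_rev,
        Matrix.nonsing_inv_nonsing_inv _ hSdet, Matrix.inv_eq_left_inv hV,
        Matrix.inv_eq_right_inv hV]
      simp only [Matrix.mul_assoc]
    rw [hKinv, Matrix.trace_mul_cycle, hVVT, Matrix.one_mul, Matrix.trace_mul_cycle, ← pow_two]
    exact htr
end

section
/- Let n be a positive integer, P̂ ∈ ℝ^{n×n} a symmetric positive definite matrix, q, q' ∈ ℝ^n, ε ≥ 0, and Δ > 0 such that ‖q − q'‖_{P̂⁻¹} ≤ Δ. Then for every Borel set S ⊆ ℝ^n, ∫_S N(u; q, P̂) du ≤ e^{ε} ∫_S N(u; q', P̂) du + Q(ε/Δ − Δ/2). (Paper's Theorem 6: the Gaussian mechanism M(d) = q(d) + ω with ω ∼ N(0, P̂) and affine query q of sensitivity Δ = Δ_{P̂⁻¹}q is (ε, δ)-differentially private with δ = Q(ξ), ξ = −Δ/2 + ε/Δ; hence the proposed privacy-preserving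 state estimation algorithm ensures (ε, δ)-differential privacy.) -/
open Matrix MeasureTheory

/-- The multivariate Gaussian density
`N(x; μ, Σ) = (2π)^{−n/2} det(Σ)^{−1/2} exp(−(1/2)(x−μ)ᵀΣ⁻¹(x−μ))`. -/
noncomputable def gaussianPdf (n : ℕ) (μ : Fin n → ℝ) (S : Matrix (Fin n) (Fin n) ℝ)
    (x : Fin n → ℝ) : ℝ :=
  (2 * Real.pi) ^ (-(n : ℝ) / 2) * S.det ^ (-(1 : ℝ) / 2) *
    Real.exp (-(1 / 2) * ((x - μ) ⬝ᵥ S⁻¹.mulVec (x - μ)))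

/-- The standard Gaussian tail function `Q(ξ) = (1/√(2π)) ∫_ξ^∞ e^{−z²/2} dz`. -/
noncomputable def gaussQ (ξ : ℝ) : ℝ :=
  (1 / Real.sqrt (2 * Real.pi)) * ∫ z in Set.Ioi ξ, Real.exp (-z ^ 2 / 2)

namespace GaussDP

noncomputable def gauss1 (t : ℝ) : ℝ := Real.exp (-t ^ 2 / 2)

lemma gauss1_nonneg (t : ℝ) : 0 ≤ gauss1 t := (Real.exp_pos _).le

lemma integrable_gauss1 : Integrable gauss1 := by
  have h : gauss1 = fun t : ℝ => Real.exp (-(1/2 : ℝ) * t ^ 2) := by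
    funext t; unfold gauss1; ring_nf
  rw [h]; exact integrable_exp_neg_mul_sq (by norm_num)

lemma integral_gauss1 : ∫ t, gauss1 t = Real.sqrt (2 * Real.pi) := by
  have : gauss1 = fun t : ℝ => Real.exp (-(1/2 : ℝ) * t ^ 2) := by
    funext t; unfold gauss1; ring_nf
  rw [this, integral_gaussian, show Real.pi / (1/2) = 2 * Real.pi by ring]



lemma gaussQ_nonneg (ξ : ℝ) : 0 ≤ gaussQ ξ := by
  apply mul_nonneg
  · positivity
  · exact setIntegral_nonneg measurableSet_Ioi fun x _ => (Real.exp_pos _).le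

lemma gaussQ_antitone {x y : ℝ} (h : x ≤ y) : gaussQ y ≤ gaussQ x := by
  apply mul_le_mul_of_nonneg_left _ (by positivity)
  apply setIntegral_mono_set
  · exact integrable_gauss1.integrableOn
  · exact Filter.Eventually.of_forall fun t => (Real.exp_pos _).le
  · exact HasSubset.Subset.eventuallyLE (Set.Ioi_subset_Ioi h)

lemma prod_gauss1_eq {n : ℕ} (x : EuclideanSpace ℝ (Fin n)) :
    ∏ i, gauss1 (x i) = Real.exp (-‖x‖ ^ 2 / 2) := by
  have hx : ‖x‖ ^ 2 = ∑ i, x i ^ 2 := by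
    rw [EuclideanSpace.norm_eq]
    rw [Real.sq_sqrt (Finset.sum_nonneg fun i _ => sq_nonneg _)]
    simp [Real.norm_eq_abs, sq_abs]
  unfold gauss1
  rw [← Real.exp_sum, hx, ← Finset.sum_div, ← Finset.sum_neg_distrib]

lemma const_eq (n : ℕ) (hn : 0 < n) :
    (2*Real.pi) ^ (-(n:ℝ)/2) * Real.sqrt (2*Real.pi) ^ (n-1) = 1 / Real.sqrt (2*Real.pi) := by
  have h2π : (0:ℝ) < 2*Real.pi := by positivity
  rw [Real.sqrt_eq_rpow, ← Real.rpow_natCast ((2*Real.pi) ^ ((1:ℝ)/2)) (n-1),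
      ← Real.rpow_mul h2π.le, ← Real.rpow_add h2π]
  rw [show -(n:ℝ)/2 + 1/2 * ((n-1 : ℕ):ℝ) = -(1/2) by rw [Nat.cast_sub hn]; push_cast; ring]
  rw [show -(1/2 : ℝ) = -(1/2) by norm_num, Real.rpow_neg h2π.le, ← Real.sqrt_eq_rpow, one_div]

lemma halfspace_integral (n : ℕ) (hn : 0 < n) (b : Fin n → ℝ) {σ : ℝ} (hσ : 0 < σ)
    (hb : b ⬝ᵥ b = σ ^ 2) (c : ℝ) :
    (2 * Real.pi) ^ (-(n : ℝ) / 2) *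
      ∫ w in {w : Fin n → ℝ | c < b ⬝ᵥ w}, ∏ i, gauss1 (w i) = gaussQ (c / σ) := by
  haveI : NeZero n := ⟨hn.ne'⟩
  set E := EuclideanSpace ℝ (Fin n)
  set φ : E ≃ᵐ (Fin n → ℝ) := (MeasurableEquiv.toLp 2 (Fin n → ℝ)).symm with hφ
  have hφap : ∀ (x : E) (i : Fin n), φ x i = x i := fun x i => rfl
  -- b' in Euclidean space
  set b' : E := (WithLp.equiv 2 (Fin n → ℝ)).symm b with hb'
  have hb'ap : ∀ i, b' i = b i := fun i => rfl
  have hb'norm : ‖b'‖ = σ := by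
    have h2 : ‖b'‖ ^ 2 = σ ^ 2 := by
      rw [EuclideanSpace.norm_eq, Real.sq_sqrt (Finset.sum_nonneg fun i _ => sq_nonneg _), ← hb]
      simp [hb'ap, Real.norm_eq_abs, sq_abs, dotProduct, sq]
    nlinarith [norm_nonneg b']
  -- orthonormal basis with B 0 = σ⁻¹ • b'
  have hcard : Module.finrank ℝ E = Fintype.card (Fin n) := by
    simp [E, finrank_euclideanSpace]
  have hON : Orthonormal ℝ (({0} : Set (Fin n)).restrict fun _ : Fin n => σ⁻¹ • b') := by
    constructor
    · intro i
      simp only [Set.restrict, Set.domRestrict_apply, norm_smul, hb'norm, Real.norm_eq_abs,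
        abs_of_pos (inv_pos.mpr hσ)]
      field_simp
    · intro i j hij
      exact absurd (Subsingleton.elim i j) hij
  obtain ⟨B, hB⟩ := hON.exists_orthonormalBasis_extension_of_card_eq hcard
  have hB0 : B 0 = σ⁻¹ • b' := hB 0 rfl
  have hb'eq : σ • B 0 = b' := by rw [hB0, smul_smul, mul_inv_cancel₀ hσ.ne', one_smul]
  set G : E → ℝ := fun x => ∏ i, gauss1 (x i) with hG
  set U : Set E := {x : E | c < inner ℝ b' x} with hU
  -- Step 1 : transfer to Euclidean space
  have step1 : ∫ w in {w : Fin n → ℝ | c < b ⬝ᵥ w}, ∏ i, gauss1 (w i) = ∫ x in U, G x := by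
    rw [← (EuclideanSpace.volume_preserving_symm_measurableEquiv_toLp (Fin n)).setIntegral_preimage_emb
      φ.measurableEmbedding (fun w => ∏ i, gauss1 (w i)) {w : Fin n → ℝ | c < b ⬝ᵥ w}]
    have hpre : φ ⁻¹' {w : Fin n → ℝ | c < b ⬝ᵥ w} = U := by
      ext x
      simp only [Set.mem_preimage, Set.mem_setOf_eq, hU]
      rw [show (inner ℝ b' x : ℝ) = b ⬝ᵥ φ x from ?_]
      rw [PiLp.inner_apply]
      simp [dotProduct, hφap, hb'ap, RCLike.inner_apply, mul_comm]
    rw [hpre]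
    rfl
  -- Step 2 : rotate
  have step2 : ∫ x in U, G x = ∫ z in {z : E | c < σ * z 0}, G z := by
    rw [← (B.measurePreserving_repr_symm).setIntegral_preimage_emb
      (B.repr.symm.toHomeomorph.measurableEmbedding) G U]
    have hpre : ⇑B.repr.symm ⁻¹' U = {z : E | c < σ * z 0} := by
      ext z
      simp only [Set.mem_preimage, Set.mem_setOf_eq, hU]
      rw [← hb'eq, real_inner_smul_left, ← B.repr_apply_apply,
        LinearIsometryEquiv.apply_symm_apply]
      exact Iff.rfl
    rw [hpre]
    apply setIntegral_congr_fun
      (measurableSet_lt measurable_const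
        (((EuclideanSpace.proj (0 : Fin n)).continuous.measurable).const_mul σ))
    intro z _
    rw [hG]
    simp only []
    rw [prod_gauss1_eq, prod_gauss1_eq, B.repr.symm.norm_map]
  -- Step 3 : back to the product space
  have step3 : ∫ z in {z : E | c < σ * z 0}, G z
      = ∫ w in {w : Fin n → ℝ | c < σ * w 0}, ∏ i, gauss1 (w i) := by
    rw [← (EuclideanSpace.volume_preserving_symm_measurableEquiv_toLp (Fin n)).setIntegral_preimage_emb
      φ.measurableEmbedding (fun w => ∏ i, gauss1 (w i)) {w : Fin n → ℝ | c < σ * w 0}]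
    rfl
  -- Step 4 : Fubini
  set h : Fin n → ℝ → ℝ :=
    fun i t => if i = 0 then Set.indicator (Set.Ioi (c/σ)) gauss1 t else gauss1 t with hh
  have step4 : ∫ w in {w : Fin n → ℝ | c < σ * w 0}, ∏ i, gauss1 (w i)
      = (∫ t in Set.Ioi (c/σ), gauss1 t) * Real.sqrt (2*Real.pi) ^ (n - 1) := by
    have hset : MeasurableSet {w : Fin n → ℝ | c < σ * w 0} :=
      measurableSet_lt measurable_const ((measurable_pi_apply (X := fun _ : Fin n => ℝ) 0).const_mul σ)
    rw [← integral_indicator hset]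
    have hind : (Set.indicator {w : Fin n → ℝ | c < σ * w 0} (fun w => ∏ i, gauss1 (w i)))
        = fun w => ∏ i, h i (w i) := by
      funext w
      by_cases hw : w ∈ {w : Fin n → ℝ | c < σ * w 0}
      · rw [Set.indicator_of_mem hw]
        refine (Finset.prod_congr rfl fun i _ => ?_).symm
        rw [hh]
        by_cases hi : i = 0
        · subst hi
          have hmem : w 0 ∈ Set.Ioi (c/σ) := by
            rw [Set.mem_Ioi, div_lt_iff₀ hσ, mul_comm]; exact hw
          simp [Set.indicator_of_mem hmem]
        · simp [hi]
      · rw [Set.indicator_of_notMem hw]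
        refine (Finset.prod_eq_zero (Finset.mem_univ 0) ?_).symm
        rw [hh]
        have hmem : w 0 ∉ Set.Ioi (c/σ) := by
          rw [Set.mem_Ioi, div_lt_iff₀ hσ, mul_comm]; exact hw
        simp [Set.indicator_of_notMem hmem]
    rw [hind, show (∫ x : Fin n → ℝ, (fun w => ∏ i, h i (w i)) x) = ∏ i, ∫ t, h i t from
      MeasureTheory.integral_fintype_prod_eq_prod (ι := Fin n) h]
    rw [← Finset.mul_prod_erase Finset.univ _ (Finset.mem_univ 0)]
    have h0 : ∫ t, h 0 t = ∫ t in Set.Ioi (c/σ), gauss1 t := by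
      rw [hh]
      simp only [if_pos rfl]
      exact integral_indicator measurableSet_Ioi
    have hrest : ∀ i ∈ Finset.univ.erase (0:Fin n), (∫ t, h i t) = Real.sqrt (2*Real.pi) := by
      intro i hi
      have hne : i ≠ 0 := (Finset.mem_erase.mp hi).1
      rw [hh]
      simp only [if_neg hne]
      exact integral_gauss1
    rw [Finset.prod_congr rfl hrest, Finset.prod_const, h0]
    congr 2
    rw [Finset.card_erase_of_mem (Finset.mem_univ 0), Finset.card_univ, Fintype.card_fin]
  rw [step1, step2, step3, step4, gaussQ, ← mul_assoc, mul_comm ((2*Real.pi) ^ (-(n:ℝ)/2)) _]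
  rw [mul_assoc, const_eq n hn, mul_comm]
  rfl

open scoped MatrixOrder in
lemma gauss_core {n : ℕ} {P : Matrix (Fin n) (Fin n) ℝ} (hP : P.PosDef) (q : Fin n → ℝ) :
    ∃ C : Matrix (Fin n) (Fin n) ℝ, Cᵀ = C ∧ C * C = P ∧
      Integrable (gaussianPdf n q P) ∧
      ∀ A : Set (Fin n → ℝ),
        ∫ u in A, gaussianPdf n q P u
          = (2*Real.pi) ^ (-(n:ℝ)/2) *
              ∫ w in (fun w => q + C *ᵥ w) ⁻¹' A, ∏ i, gauss1 (w i) := by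
  classical
  set C := CFC.sqrt P with hCdefn
  have hCherm := (Matrix.nonneg_iff_posSemidef.mp (CFC.sqrt_nonneg P)).1
  have hCsymm : Cᵀ = C := by
    rwa [Matrix.IsHermitian, Matrix.conjTranspose_eq_transpose_of_trivial] at hCherm
  have hCC : C * C = P := CFC.sqrt_mul_sqrt_self P hP.posSemidef.nonneg
  have hPdet : 0 < P.det := hP.det_pos
  have hdet2 : C.det * C.det = P.det := by rw [← Matrix.det_mul, hCC]
  have hCdet : C.det ≠ 0 := by
    intro h
    rw [h, zero_mul] at hdet2
    exact hPdet.ne hdet2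
  have habs : |C.det| = Real.sqrt P.det := by
    rw [← hdet2, ← sq, Real.sqrt_sq_eq_abs]
  have hCunit : IsUnit C.det := isUnit_iff_ne_zero.mpr hCdet
  have hCinvC : C⁻¹ * C = 1 := Matrix.nonsing_inv_mul C hCunit
  have hCCinv : C * C⁻¹ = 1 := Matrix.mul_nonsing_inv C hCunit
  have hCPC : C * (P⁻¹ * C) = 1 := by
    rw [show P⁻¹ = C⁻¹ * C⁻¹ from by rw [← hCC, Matrix.mul_inv_rev],
        Matrix.mul_assoc C⁻¹ C⁻¹ C, hCinvC, Matrix.mul_one, hCCinv]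
  set T : (Fin n → ℝ) → (Fin n → ℝ) := fun w => q + C *ᵥ w with hT
  have hTlin : T = (fun v => q + v) ∘ ⇑(Matrix.toLin' C) := by
    funext w; simp [hT, Matrix.toLin'_apply]
  have hmeas_lin : Measurable (⇑(Matrix.toLin' C)) :=
    (LinearMap.continuous_on_pi _).measurable
  have hmv : ∀ M : Matrix (Fin n) (Fin n) ℝ, Measurable (fun w : Fin n → ℝ => M *ᵥ w) := by
    intro M
    apply measurable_pi_lambda
    intro i
    simpa [Matrix.mulVec, dotProduct] using Finset.measurable_sum Finset.univ
      (fun j _ => (measurable_pi_apply (X := fun _ : Fin n => ℝ) j).const_mul (M i j))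
  have hTemb : MeasurableEmbedding T := by
    have h1 : MeasurableEmbedding (fun w : Fin n → ℝ => C *ᵥ w) := by
      exact MeasurableEquiv.measurableEmbedding
        { toFun := fun w => C *ᵥ w
          invFun := fun v => C⁻¹ *ᵥ v
          left_inv := fun w => by simp [Matrix.mulVec_mulVec, hCinvC]
          right_inv := fun v => by simp [Matrix.mulVec_mulVec, hCCinv]
          measurable_toFun := hmv C
          measurable_invFun := hmv C⁻¹ }
    have h2 : MeasurableEmbedding (fun v : Fin n → ℝ => q + v) :=
      (Homeomorph.addLeft q).measurableEmbedding
    exact h2.comp h1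
  have hmapT : Measure.map T volume = ENNReal.ofReal |C.det|⁻¹ • volume := by
    rw [hTlin, ← Measure.map_map (measurable_const_add q) hmeas_lin,
        Real.map_matrix_volume_pi_eq_smul_volume_pi hCdet, Measure.map_smul,
        (measurePreserving_add_left volume q).map_eq, abs_inv]
  have hvol : (volume : Measure (Fin n → ℝ)) = ENNReal.ofReal |C.det| • Measure.map T volume := by
    rw [hmapT, smul_smul, ← ENNReal.ofReal_mul (abs_nonneg _),
        mul_inv_cancel₀ (abs_ne_zero.mpr hCdet), ENNReal.ofReal_one, one_smul]
  have hquad : ∀ w : Fin n → ℝ, (C *ᵥ w) ⬝ᵥ P⁻¹ *ᵥ (C *ᵥ w) = w ⬝ᵥ w := by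
    intro w
    have hCw : C *ᵥ w = w ᵥ* C := by rw [← Matrix.mulVec_transpose, hCsymm]
    rw [Matrix.mulVec_mulVec, Matrix.dotProduct_mulVec, hCw, Matrix.vecMul_vecMul,
        hCPC, Matrix.vecMul_one]
  have hpdfT : ∀ w, gaussianPdf n q P (T w)
      = (P.det ^ (-(1:ℝ)/2)) * ((2*Real.pi) ^ (-(n:ℝ)/2) * ∏ i, gauss1 (w i)) := by
    intro w
    unfold gaussianPdf
    have h1 : T w - q = C *ᵥ w := by simp [hT]
    rw [h1, hquad w]
    have h2 : Real.exp (-(1/2) * (w ⬝ᵥ w)) = ∏ i, gauss1 (w i) := by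
      unfold gauss1
      rw [← Real.exp_sum]
      congr 1
      simp only [dotProduct, Finset.mul_sum]
      exact Finset.sum_congr rfl fun i _ => by ring
    rw [h2]
    ring
  have hrd : P.det ^ (-(1:ℝ)/2) = (Real.sqrt P.det)⁻¹ := by
    rw [neg_div, Real.rpow_neg hPdet.le, ← Real.sqrt_eq_rpow]
  have hone : |C.det| * P.det ^ (-(1:ℝ)/2) = 1 := by
    rw [habs, hrd, mul_inv_cancel₀ (Real.sqrt_ne_zero'.mpr hPdet)]
  have hinteg : Integrable (gaussianPdf n q P) := by
    have h1 : Integrable (gaussianPdf n q P) (Measure.map T volume) := by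
      rw [hTemb.integrable_map_iff]
      have heq : (gaussianPdf n q P ∘ T) = fun w =>
          (P.det ^ (-(1:ℝ)/2) * (2*Real.pi) ^ (-(n:ℝ)/2)) * ∏ i, gauss1 (w i) := by
        funext w
        rw [Function.comp_apply, hpdfT w]
        ring
      rw [heq]
      exact (Integrable.fintype_prod (fun _ : Fin n => integrable_gauss1)).const_mul _
    have h2 := h1.smul_measure (c := ENNReal.ofReal |C.det|) ENNReal.ofReal_ne_top
    rwa [← hvol] at h2
  refine ⟨C, hCsymm, hCC, hinteg, fun A => ?_⟩
  conv_lhs => rw [hvol]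
  rw [Measure.restrict_smul, integral_smul_measure, hTemb.setIntegral_map,
      ENNReal.toReal_ofReal (abs_nonneg _), smul_eq_mul]
  simp_rw [hpdfT]
  rw [integral_const_mul, integral_const_mul]
  rw [show |C.det| * (P.det ^ (-(1:ℝ)/2) * ((2*Real.pi) ^ (-(n:ℝ)/2) *
        ∫ w in T ⁻¹' A, ∏ i, gauss1 (w i)))
      = (|C.det| * P.det ^ (-(1:ℝ)/2)) * ((2*Real.pi) ^ (-(n:ℝ)/2) *
        ∫ w in T ⁻¹' A, ∏ i, gauss1 (w i)) from by ring, hone, one_mul]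

lemma pdf_nonneg {n : ℕ} {P : Matrix (Fin n) (Fin n) ℝ} (hP : P.PosDef) (q u : Fin n → ℝ) :
    0 ≤ gaussianPdf n q P u := by
  unfold gaussianPdf
  exact mul_nonneg (mul_nonneg (Real.rpow_nonneg (by positivity) _)
    (Real.rpow_nonneg hP.det_pos.le _)) (Real.exp_pos _).le

lemma tail_integral {n : ℕ} (hn : 0 < n) {P : Matrix (Fin n) (Fin n) ℝ} (hP : P.PosDef)
    (q a : Fin n → ℝ) {σ2 : ℝ} (hσa : a ⬝ᵥ P *ᵥ a = σ2) (hσpos : 0 < σ2) (c : ℝ) :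
    ∫ u in {u : Fin n → ℝ | c < a ⬝ᵥ (u - q)}, gaussianPdf n q P u
      = gaussQ (c / Real.sqrt σ2) := by
  obtain ⟨C, hCsymm, hCC, _, hint⟩ := gauss_core hP q
  rw [hint]
  have haC : a ᵥ* C = C *ᵥ a := by rw [← Matrix.mulVec_transpose, hCsymm]
  have hpre : (fun w => q + C *ᵥ w) ⁻¹' {u : Fin n → ℝ | c < a ⬝ᵥ (u - q)}
      = {w : Fin n → ℝ | c < (C *ᵥ a) ⬝ᵥ w} := by
    ext w
    simp only [Set.mem_preimage, Set.mem_setOf_eq, add_sub_cancel_left]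
    rw [Matrix.dotProduct_mulVec, haC]
  have hb : (C *ᵥ a) ⬝ᵥ (C *ᵥ a) = Real.sqrt σ2 ^ 2 := by
    rw [Real.sq_sqrt hσpos.le, Matrix.dotProduct_mulVec, ← haC, Matrix.vecMul_vecMul, hCC,
        ← Matrix.dotProduct_mulVec, hσa]
  rw [hpre]
  exact halfspace_integral n hn (C *ᵥ a) (Real.sqrt_pos.mpr hσpos) hb c


lemma mainineq {n : ℕ} {P : Matrix (Fin n) (Fin n) ℝ} (hP : P.PosDef)
    (q q' : Fin n → ℝ) (ε : ℝ) {u : Fin n → ℝ}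
    (h : (P⁻¹ *ᵥ (q - q')) ⬝ᵥ (u - q) ≤ ε - ((q - q') ⬝ᵥ P⁻¹ *ᵥ (q - q')) / 2) :
    -(1 / 2) * ((u - q) ⬝ᵥ P⁻¹ *ᵥ (u - q))
      ≤ ε + -(1 / 2) * ((u - q') ⬝ᵥ P⁻¹ *ᵥ (u - q')) := by
  set M := P⁻¹ with hM
  have hMsym : Mᵀ = M := by
    have h' := hP.inv.1
    rwa [Matrix.IsHermitian, Matrix.conjTranspose_eq_transpose_of_trivial] at h'
  set v := u - q with hv
  set d := q - q' with hd
  have hsym : d ⬝ᵥ M *ᵥ v = v ⬝ᵥ M *ᵥ d := by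
    rw [Matrix.dotProduct_mulVec d M v, ← Matrix.mulVec_transpose, hMsym,
        dotProduct_comm]
  have hcomm : (M *ᵥ d) ⬝ᵥ v = v ⬝ᵥ M *ᵥ d := dotProduct_comm _ _
  have huq' : u - q' = v + d := by rw [hv, hd]; abel
  rw [huq']
  have hexp : (v + d) ⬝ᵥ M *ᵥ (v + d)
      = v ⬝ᵥ M *ᵥ v + 2 * (v ⬝ᵥ M *ᵥ d) + d ⬝ᵥ M *ᵥ d := by
    rw [Matrix.mulVec_add, dotProduct_add, add_dotProduct,
        add_dotProduct, hsym]
    ring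
  rw [hexp]
  rw [hcomm] at h
  linarith

lemma pdf_ratio_le {n : ℕ} {P : Matrix (Fin n) (Fin n) ℝ} (hP : P.PosDef)
    (q q' : Fin n → ℝ) (ε : ℝ) {u : Fin n → ℝ}
    (h : (P⁻¹ *ᵥ (q - q')) ⬝ᵥ (u - q) ≤ ε - ((q - q') ⬝ᵥ P⁻¹ *ᵥ (q - q')) / 2) :
    gaussianPdf n q P u ≤ Real.exp ε * gaussianPdf n q' P u := by
  unfold gaussianPdf
  have hK : (0:ℝ) ≤ (2 * Real.pi) ^ (-(n:ℝ) / 2) * P.det ^ (-(1:ℝ) / 2) :=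
    mul_nonneg (Real.rpow_nonneg (by positivity) _) (Real.rpow_nonneg hP.det_pos.le _)
  have hAB : Real.exp (-(1 / 2) * ((u - q) ⬝ᵥ P⁻¹ *ᵥ (u - q)))
      ≤ Real.exp ε * Real.exp (-(1 / 2) * ((u - q') ⬝ᵥ P⁻¹ *ᵥ (u - q'))) := by
    rw [← Real.exp_add]
    apply Real.exp_le_exp.mpr
    exact mainineq hP q q' ε h
  have h2 := mul_le_mul_of_nonneg_left hAB hK
  refine le_trans (le_of_eq (by ring)) (le_trans h2 (le_of_eq (by ring)))

end GaussDP

open GaussDP in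
/-- Paper's Theorem 6: the Gaussian mechanism with covariance `P̂` and affine
query of sensitivity `Δ = ‖q − q'‖_{P̂⁻¹}` is `(ε, δ)`-differentially private
with `δ = Q(ε/Δ − Δ/2)`: for every Borel set `S`,
`∫_S N(u; q, P̂) du ≤ e^ε ∫_S N(u; q', P̂) du + Q(ε/Δ − Δ/2)`. -/
theorem gaussian_mechanism_differential_privacy
    (n : ℕ) (hn : 0 < n)
    (P : Matrix (Fin n) (Fin n) ℝ) (hP : P.PosDef)
    (q q' : Fin n → ℝ) (ε Δ : ℝ) (hε : 0 ≤ ε) (hΔ : 0 < Δ)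
    (hsens : Real.sqrt ((q - q') ⬝ᵥ P⁻¹.mulVec (q - q')) ≤ Δ)
    (S : Set (Fin n → ℝ)) (hS : MeasurableSet S) :
    (∫ u in S, gaussianPdf n q P u) ≤
      Real.exp ε * (∫ u in S, gaussianPdf n q' P u) + gaussQ (ε / Δ - Δ / 2) := by
  by_cases hqq : q = q'
  · have h1 : ∫ u in S, gaussianPdf n q P u = ∫ u in S, gaussianPdf n q' P u := by rw [hqq]
    have h2 : 0 ≤ ∫ u in S, gaussianPdf n q' P u :=
      setIntegral_nonneg hS fun u _ => pdf_nonneg hP q' u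
    rw [h1]
    nlinarith [mul_le_mul_of_nonneg_right (Real.one_le_exp hε) h2,
      gaussQ_nonneg (ε / Δ - Δ / 2)]
  · set d := q - q' with hd
    have hdne : d ≠ 0 := sub_ne_zero.mpr hqq
    have hσ2pos : 0 < d ⬝ᵥ P⁻¹ *ᵥ d := by
      have h' := hP.inv.dotProduct_mulVec_pos hdne
      simpa using h'
    set σ2 := d ⬝ᵥ P⁻¹ *ᵥ d with hσ2
    set σ := Real.sqrt σ2 with hσ
    have hσpos : 0 < σ := Real.sqrt_pos.mpr hσ2pos
    have hσΔ : σ ≤ Δ := hsens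
    set a := P⁻¹ *ᵥ d with ha
    set c := ε - σ2 / 2 with hc
    set Tset := {u : Fin n → ℝ | c < a ⬝ᵥ (u - q)} with hTs
    have hTmeas : MeasurableSet Tset := by
      apply measurableSet_lt measurable_const
      have : (fun u : Fin n → ℝ => a ⬝ᵥ (u - q))
          = fun u => ∑ i, a i * (u i - q i) := by
        funext u; simp only [dotProduct, Pi.sub_apply]
      rw [this]
      exact Finset.measurable_sum Finset.univ fun i _ =>
        ((measurable_pi_apply (X := fun _ : Fin n => ℝ) i).sub_const (q i)).const_mul (a i)
    obtain ⟨_, _, _, hfint, _⟩ := gauss_core hP q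
    obtain ⟨_, _, _, hgint, _⟩ := gauss_core hP q'
    have hfnn : ∀ u, 0 ≤ gaussianPdf n q P u := pdf_nonneg hP q
    have hgnn : ∀ u, 0 ≤ gaussianPdf n q' P u := pdf_nonneg hP q'
    have hsplit := integral_inter_add_diff (μ := volume) (s := S) (t := Tset) hTmeas
      hfint.integrableOn (f := gaussianPdf n q P)
    have hPa : P *ᵥ a = d := by
      rw [ha, Matrix.mulVec_mulVec, Matrix.mul_nonsing_inv P (isUnit_iff_ne_zero.mpr hP.det_pos.ne'), Matrix.one_mulVec]
    have hσa : a ⬝ᵥ P *ᵥ a = σ2 := by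
      rw [hPa, dotProduct_comm, hσ2, ha]
    have htail : ∫ u in S ∩ Tset, gaussianPdf n q P u ≤ gaussQ (ε / Δ - Δ / 2) := by
      calc ∫ u in S ∩ Tset, gaussianPdf n q P u
          ≤ ∫ u in Tset, gaussianPdf n q P u :=
            setIntegral_mono_set hfint.integrableOn
              (Filter.Eventually.of_forall hfnn)
              (HasSubset.Subset.eventuallyLE Set.inter_subset_right)
        _ = gaussQ (c / σ) := tail_integral hn hP q a hσa hσ2pos c
        _ ≤ gaussQ (ε / Δ - Δ / 2) := by
            apply gaussQ_antitone
            have hcs : c / σ = ε / σ - σ / 2 := by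
              rw [hc, show σ2 = σ ^ 2 from (Real.sq_sqrt hσ2pos.le).symm]
              field_simp
            rw [hcs]
            have h1 : ε / Δ ≤ ε / σ := by
              apply div_le_div_of_nonneg_left hε hσpos hσΔ
            linarith
    have hmain : ∫ u in S \ Tset, gaussianPdf n q P u
        ≤ Real.exp ε * ∫ u in S, gaussianPdf n q' P u := by
      calc ∫ u in S \ Tset, gaussianPdf n q P u
          ≤ ∫ u in S \ Tset, Real.exp ε * gaussianPdf n q' P u := by
            apply setIntegral_mono_on hfint.integrableOn
              ((hgint.const_mul _).integrableOn) (hS.diff hTmeas)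
            intro u hu
            have h3 : a ⬝ᵥ (u - q) ≤ c := not_lt.mp hu.2
            apply pdf_ratio_le hP q q' ε
            rw [← hd, ← hσ2, ← ha, ← hc]
            exact h3
        _ = Real.exp ε * ∫ u in S \ Tset, gaussianPdf n q' P u := integral_const_mul _ _
        _ ≤ Real.exp ε * ∫ u in S, gaussianPdf n q' P u := by
            apply mul_le_mul_of_nonneg_left _ (Real.exp_pos ε).le
            exact setIntegral_mono_set hgint.integrableOn
              (Filter.Eventually.of_forall hgnn)
              (HasSubset.Subset.eventuallyLE Set.diff_subset)
    linarith [hsplit, htail, hmain]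
end
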